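/- Let m ≥ 1 be a natural number and n > 0 a real number. Let L₀ be a real random variable with distribution N(m/(2n), m/n) and L₁ a real random variable with distribution N(−m/(2n), m/n). For any threshold t ∈ ℝ, set α = P(L₀ ≤ t) and β = P(L₁ ≤ t). Then Φ⁻¹(1−α) + Φ⁻¹(β) = √(m/n); in quantile notation, z_α + z_{1−β} = √(m/n). -/

import Mathlib

open MeasureTheory ProbabilityTheory

/-- Φ: the cumulative distribution function of the standard normal distribution N(0,1). -/
noncomputable def stdNormalCDF (x : ℝ) : ℝ :=
  ((gaussianReal 0 1) (Set.Iic x)).toReal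

/-- Φ⁻¹: the inverse of the standard normal CDF (on (0,1)). -/
noncomputable def stdNormalCDFInv : ℝ → ℝ :=
  Function.invFun stdNormalCDF

lemma stdNormalCDF_strictMono : StrictMono stdNormalCDF := by
  intro a b hab
  unfold stdNormalCDF
  have hfin : (gaussianReal 0 1) (Set.Iic b) ≠ ⊤ := measure_ne_top _ _
  have hfa : (gaussianReal 0 1) (Set.Iic a) ≠ ⊤ := measure_ne_top _ _
  have hpos : 0 < (gaussianReal 0 1) (Set.Ioc a b) := by
    rw [pos_iff_ne_zero]
    intro h0
    have := gaussianReal_absolutelyContinuous' 0 (v := 1) one_ne_zero h0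
    rw [Real.volume_Ioc] at this
    simp only [ENNReal.ofReal_eq_zero] at this
    linarith
  have hsplit : (gaussianReal 0 1) (Set.Iic a) + (gaussianReal 0 1) (Set.Ioc a b)
      = (gaussianReal 0 1) (Set.Iic b) := by
    rw [← measure_union (Set.Iic_disjoint_Ioc le_rfl) measurableSet_Ioc]
    congr 1
    exact Set.Iic_union_Ioc_eq_Iic hab.le
  have : (gaussianReal 0 1) (Set.Iic a) < (gaussianReal 0 1) (Set.Iic b) := by
    rw [← hsplit]
    exact ENNReal.lt_add_right hfa hpos.ne'
  exact ENNReal.toReal_lt_toReal hfa hfin |>.2 this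

lemma stdNormalCDFInv_CDF (x : ℝ) : stdNormalCDFInv (stdNormalCDF x) = x :=
  Function.leftInverse_invFun stdNormalCDF_strictMono.injective x

lemma stdNormalCDF_neg (x : ℝ) : stdNormalCDF (-x) = 1 - stdNormalCDF x := by
  have hmap : (gaussianReal 0 1).map (fun y => (-1 : ℝ) * y) = gaussianReal 0 1 := by
    rw [gaussianReal_map_const_mul]
    norm_num
  have h1 : (gaussianReal 0 1) (Set.Iic (-x)) = (gaussianReal 0 1) (Set.Ici x) := by
    conv_lhs => rw [← hmap, Measure.map_apply (by fun_prop) measurableSet_Iic]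
    congr 1
    ext y
    simp only [Set.mem_preimage, Set.mem_Iic, Set.mem_Ici]
    constructor <;> intro h <;> linarith
  have hatom : (gaussianReal 0 1) {x} = 0 := by
    apply gaussianReal_absolutelyContinuous 0 one_ne_zero
    simp
  have h2 : (gaussianReal 0 1) (Set.Ici x) = 1 - (gaussianReal 0 1) (Set.Iic x) + (gaussianReal 0 1) {x} := by
    have hIio : (gaussianReal 0 1) (Set.Iio x) + (gaussianReal 0 1) (Set.Ici x) = 1 := by
      rw [← measure_union (Set.Iio_disjoint_Ici le_rfl) measurableSet_Ici,
        Set.Iio_union_Ici]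
      exact measure_univ
    have hIic : (gaussianReal 0 1) (Set.Iic x) = (gaussianReal 0 1) (Set.Iio x) := by
      have : Set.Iic x = Set.Iio x ∪ {x} := by ext y; simp [le_iff_lt_or_eq]
      rw [this, measure_union (by simp) (measurableSet_singleton x), hatom, add_zero]
    rw [hatom, add_zero, hIic, ← hIio, ENNReal.add_sub_cancel_left (measure_ne_top _ _)]
  unfold stdNormalCDF
  rw [h1, h2, hatom, add_zero]
  rw [ENNReal.toReal_sub_of_le (prob_le_one) (by simp)]
  simp

lemma gaussian_Iic (μ : ℝ) (σ : ℝ) (hσ : 0 < σ) (t : ℝ) :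
    ((gaussianReal μ (Real.toNNReal (σ^2))) (Set.Iic t)).toReal = stdNormalCDF ((t - μ) / σ) := by
  have hmap : (gaussianReal 0 1).map (fun x => σ * x + μ) = gaussianReal μ (Real.toNNReal (σ^2)) := by
    have h1 : (gaussianReal 0 1).map (fun x => σ * x) = gaussianReal 0 (Real.toNNReal (σ^2)) := by
      rw [show (fun x => σ * x) = (σ * ·) from rfl, gaussianReal_map_const_mul]
      congr 1
      · ring
      · ext
        simp [Real.coe_toNNReal _ (sq_nonneg σ)]
    have h2 := gaussianReal_map_add_const (μ := 0) (v := Real.toNNReal (σ^2)) μ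
    rw [← h1, Measure.map_map (by fun_prop) (by fun_prop), zero_add] at h2
    rw [← h2]
    rfl
  rw [← hmap, Measure.map_apply (by fun_prop) measurableSet_Iic]
  unfold stdNormalCDF
  congr 2
  ext x
  simp only [Set.mem_preimage, Set.mem_Iic]
  rw [le_div_iff₀ hσ]
  constructor <;> intro h <;> nlinarith

/-- Specialization of Theorem 1 recovering Sankararaman et al.: for a model of m
independent binary marginals (complexity m), z_α + z_{1−β} = √(m/n). -/
theorem stmt_3 {Ω : Type*} [MeasurableSpace Ω] (P : Measure Ω) [IsProbabilityMeasure P]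
    (m : ℕ) (hm : 1 ≤ m) (n : ℝ) (hn : 0 < n)
    (L₀ L₁ : Ω → ℝ)
    (h₀ : P.map L₀ = gaussianReal ((m : ℝ) / (2 * n)) (Real.toNNReal ((m : ℝ) / n)))
    (h₁ : P.map L₁ = gaussianReal (-((m : ℝ) / (2 * n))) (Real.toNNReal ((m : ℝ) / n)))
    (t : ℝ) (α β : ℝ)
    (hα : α = (P {ω | L₀ ω ≤ t}).toReal)
    (hβ : β = (P {ω | L₁ ω ≤ t}).toReal) :
    stdNormalCDFInv (1 - α) + stdNormalCDFInv β = Real.sqrt ((m : ℝ) / n) := by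
  set σ : ℝ := Real.sqrt ((m : ℝ) / n) with hσdef
  have hmn : (0 : ℝ) < (m : ℝ) / n := by
    apply div_pos _ hn
    exact_mod_cast Nat.lt_of_lt_of_le Nat.zero_lt_one hm
  have hσ : 0 < σ := Real.sqrt_pos.2 hmn
  have hσ2 : σ ^ 2 = (m : ℝ) / n := Real.sq_sqrt hmn.le
  have hmeas₀ : AEMeasurable L₀ P := by
    by_contra h
    rw [Measure.map_of_not_aemeasurable h] at h₀
    have := congrArg (· Set.univ) h₀
    simp only [Measure.coe_zero, Pi.zero_apply, measure_univ] at this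
    exact one_ne_zero this.symm
  have hmeas₁ : AEMeasurable L₁ P := by
    by_contra h
    rw [Measure.map_of_not_aemeasurable h] at h₁
    have := congrArg (· Set.univ) h₁
    simp only [Measure.coe_zero, Pi.zero_apply, measure_univ] at this
    exact one_ne_zero this.symm
  have hv : Real.toNNReal ((m : ℝ) / n) = Real.toNNReal (σ ^ 2) := by rw [hσ2]
  have key₀ : α = stdNormalCDF ((t - (m : ℝ) / (2 * n)) / σ) := by
    rw [hα, show {ω | L₀ ω ≤ t} = L₀ ⁻¹' (Set.Iic t) from rfl,
      ← Measure.map_apply_of_aemeasurable hmeas₀ measurableSet_Iic, h₀, hv,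
      gaussian_Iic _ _ hσ]
  have key₁ : β = stdNormalCDF ((t + (m : ℝ) / (2 * n)) / σ) := by
    rw [hβ, show {ω | L₁ ω ≤ t} = L₁ ⁻¹' (Set.Iic t) from rfl,
      ← Measure.map_apply_of_aemeasurable hmeas₁ measurableSet_Iic, h₁, hv,
      gaussian_Iic _ _ hσ, sub_neg_eq_add]
  have h1α : 1 - α = stdNormalCDF (-((t - (m : ℝ) / (2 * n)) / σ)) := by
    rw [key₀, stdNormalCDF_neg]
  rw [h1α, key₁, stdNormalCDFInv_CDF, stdNormalCDFInv_CDF]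
  have hred : -((t - (m : ℝ) / (2 * n)) / σ) + (t + (m : ℝ) / (2 * n)) / σ
      = (2 * ((m : ℝ) / (2 * n))) / σ := by ring
  have h2μ : 2 * ((m : ℝ) / (2 * n)) = σ ^ 2 := by
    rw [hσ2]; field_simp
  rw [hred, h2μ, sq, mul_div_assoc, div_self hσ.ne', mul_one]
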